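/- Let 𝒜 be an alphabet and let a, b ∈ 𝒜⁺ be positive words such that b is a cyclic block interchange of a. Then cl_{F(𝒜)}(a + b⁻¹) ≤ 1. -/

import Mathlib

open scoped commutatorElement in
/-- The commutator length of `g`: the least `k` such that `g` is a product of
`k` commutators (and `0` if no such `k` exists, e.g. `cl` of the identity is `0`). -/
noncomputable def cl (G : Type*) [Group G] (g : G) : ℕ :=
  sInf {k | ∃ l : List (G × G), l.length = k ∧ (l.map fun p => ⁅p.1, p.2⁆).prod = g}

/-- The commutator length of a chain `g₁ + ⋯ + gₙ`, encoded as a list: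
the minimum of `cl` over all products of conjugates `t₁g₁t₁⁻¹ ⋯ tₙgₙtₙ⁻¹`. -/
noncomputable def clChain (G : Type*) [Group G] (c : List G) : ℕ :=
  sInf {m | ∃ t : List G, t.length = c.length ∧
    m = cl G (List.zipWith (fun a b => a * b * a⁻¹) t c).prod}

/-- Two positive words are related if they contain the same number of each letter. -/
def Related {A : Type*} [DecidableEq A] (v w : List A) : Prop :=
  ∀ a : A, v.count a = w.count a

/-- `w` is a cyclic block interchange of `v`. -/
def IsCBI {A : Type*} (v w : List A) : Prop :=
  ∃ v' w' : List A, List.IsRotated v' v ∧ List.IsRotated w' w ∧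
    ∃ w1 w2 w3 w4 : List A, v' = w1 ++ w2 ++ w3 ++ w4 ∧ w' = w1 ++ w4 ++ w3 ++ w2

open Classical in
/-- The cyclic block interchange distance between two related words. -/
noncomputable def dcbi {A : Type*} (v w : List A) : ℕ :=
  if List.IsRotated v w then 0
  else sInf {k | ∃ z : ℕ → List A, z 0 = v ∧ z k = w ∧ ∀ i < k, IsCBI (z i) (z (i + 1))}

/-- A positive word regarded as an element of the free group. -/
def toFree {A : Type*} (v : List A) : FreeGroup A := (v.map FreeGroup.of).prod

theorem toFree_append {A : Type*} (v w : List A) :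
    toFree (v ++ w) = toFree v * toFree w := by
  simp [toFree]

/-- `toFree` of a rotation is a conjugate. -/
theorem toFree_isRotated_conj {A : Type*} {v w : List A} (h : List.IsRotated v w) :
    ∃ s : FreeGroup A, toFree w = s⁻¹ * toFree v * s := by
  obtain ⟨n, rfl⟩ := h
  refine ⟨toFree (v.take (n % v.length)), ?_⟩
  rcases Nat.eq_zero_or_pos v.length with h0 | h0
  · simp [List.length_eq_zero_iff.mp h0, toFree]
  have h1 : toFree v = toFree (v.take (n % v.length)) * toFree (v.drop (n % v.length)) := by
    rw [← toFree_append, List.take_append_drop]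
  rw [← List.rotate_mod, List.rotate_eq_drop_append_take (le_of_lt (Nat.mod_lt _ h0)),
    toFree_append, h1]
  group

/-- If `b` is a cyclic block interchange of `a`, then `cl_{F(𝒜)}(a + b⁻¹) ≤ 1`. -/
theorem cl_chain_cbi_le_one {A : Type*} (a b : List A) (h : IsCBI a b) :
    clChain (FreeGroup A) [toFree a, (toFree b)⁻¹] ≤ 1 := by
  obtain ⟨v', w', hv, hw, w1, w2, w3, w4, hv', hw'⟩ := h
  obtain ⟨s, hs⟩ := toFree_isRotated_conj hv
  obtain ⟨r, hr⟩ := toFree_isRotated_conj hw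
  set u1 := toFree w1
  set u2 := toFree w2
  set u3 := toFree w3
  set u4 := toFree w4
  have hpv : toFree v' = u1 * u2 * u3 * u4 := by
    subst hv'; simp [toFree_append, mul_assoc]; rfl
  have hpw : toFree w' = u1 * u4 * u3 * u2 := by
    subst hw'; simp [toFree_append, mul_assoc]; rfl
  rw [hpv] at hs
  rw [hpw] at hr
  set t1 : FreeGroup A := u1⁻¹ * s
  set t2 : FreeGroup A := u1⁻¹ * r
  set g : FreeGroup A :=
    (List.zipWith (fun a b => a * b * a⁻¹) [t1, t2] [toFree a, (toFree b)⁻¹]).prod with hg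
  open scoped commutatorElement in
  have key : ⁅u2 * u3, u4 * u3⁆ = g := by
    simp only [hg, List.zipWith, List.prod_cons, List.prod_nil, hs, hr, t1, t2,
      commutatorElement_def]
    group
  calc clChain (FreeGroup A) [toFree a, (toFree b)⁻¹]
      ≤ cl (FreeGroup A) g := Nat.sInf_le ⟨[t1, t2], rfl, rfl⟩
    _ ≤ 1 := Nat.sInf_le ⟨[(u2 * u3, u4 * u3)], rfl, by simpa using key⟩
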